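/- Let σ_0 > 0, β ∈ (0,1), and let η_0,...,η_{N−1} > 0 satisfy: for each k ∈ {0,...,N−1}, either η_k = σ_k or η_k ≥ c_k, where σ_k = η_{k−1}/β for k ≥ 1 and c_k > 0 are given lower bounds. Then Σ_{k=0}^{N−1} 1/η_k² ≤ 1/((1−β²)σ_0²) + (1/(1−β²)) Σ_{k : η_k ≠ σ_k} 1/c_k². -/

import Mathlib

open Classical in
/-- Bound on the sum of inverse squared step sizes produced by the
backtracking line search. -/
theorem sum_inverse_stepsize_sq_bound (N : ℕ) (β σ0 : ℝ)
    (hβ0 : 0 < β) (hβ1 : β < 1) (hσ0 : 0 < σ0)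
    (η σ c : ℕ → ℝ)
    (hσzero : σ 0 = σ0) (hσsucc : ∀ k, 1 ≤ k → σ k = η (k - 1) / β)
    (hηpos : ∀ k < N, 0 < η k) (hcpos : ∀ k < N, 0 < c k)
    (hcase : ∀ k < N, η k = σ k ∨ η k ≥ c k) :
    ∑ k ∈ Finset.range N, 1 / (η k) ^ 2 ≤
      1 / ((1 - β ^ 2) * σ0 ^ 2) +
        (1 / (1 - β ^ 2)) *
          ∑ k ∈ (Finset.range N).filter (fun k => η k ≠ σ k), 1 / (c k) ^ 2 := by
  have hb2 : 0 < 1 - β ^ 2 := by nlinarith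
  set f : ℕ → ℝ := fun k => 1 / (η k) ^ 2 with hfdef
  have hfnn : ∀ k, 0 ≤ f k := fun k => one_div_nonneg.mpr (sq_nonneg _)
  set g : ℕ → ℝ := fun k => if k = 0 then 1 / σ0 ^ 2 else β ^ 2 * f (k - 1) with hgdef
  have hgnn : ∀ k, 0 ≤ g k := by
    intro k
    simp only [hgdef]
    split
    · positivity
    · exact mul_nonneg (sq_nonneg _) (hfnn _)
  set S : ℝ := ∑ k ∈ Finset.range N, f k with hSdef
  set T : ℝ := ∑ k ∈ (Finset.range N).filter (fun k => η k ≠ σ k), 1 / (c k) ^ 2 with hTdef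
  -- Step B
  have hB : ∑ k ∈ (Finset.range N).filter (fun k => η k ≠ σ k), f k ≤ T := by
    apply Finset.sum_le_sum
    intro k hk
    simp only [Finset.mem_filter, Finset.mem_range] at hk
    have hck : 0 < c k := hcpos k hk.1
    have hηk : c k ≤ η k := (hcase k hk.1).resolve_left hk.2
    have : c k ^ 2 ≤ η k ^ 2 := by nlinarith
    exact one_div_le_one_div_of_le (by positivity) this
  -- Step C1
  have hC1 : ∑ k ∈ (Finset.range N).filter (fun k => η k = σ k), f k ≤
      ∑ k ∈ (Finset.range N).filter (fun k => η k = σ k), g k := by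
    apply Finset.sum_le_sum
    intro k hk
    simp only [Finset.mem_filter, Finset.mem_range] at hk
    rcases Nat.eq_zero_or_pos k with rfl | hk1
    · simp only [hgdef, hfdef, if_pos rfl]
      rw [hk.2, hσzero]
    · have hk1' : 1 ≤ k := hk1
      have hkm : k - 1 < N := lt_of_le_of_lt (Nat.sub_le _ _) hk.1
      have hηm : 0 < η (k - 1) := hηpos _ hkm
      have : η k = η (k - 1) / β := by rw [hk.2, hσsucc k hk1']
      simp only [hgdef, hfdef, if_neg (Nat.pos_iff_ne_zero.mp hk1)]
      rw [this]
      rw [div_pow]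
      rw [one_div_div]
      rw [div_eq_mul_one_div]
  have hC2 : ∑ k ∈ (Finset.range N).filter (fun k => η k = σ k), g k ≤
      ∑ k ∈ Finset.range N, g k :=
    Finset.sum_le_sum_of_subset_of_nonneg (Finset.filter_subset _ _)
      (fun k _ _ => hgnn k)
  have hC3 : ∑ k ∈ Finset.range N, g k ≤ 1 / σ0 ^ 2 + β ^ 2 * S := by
    rcases N with _ | m
    · simp [hSdef]
      positivity
    · rw [Finset.sum_range_succ']
      have h1 : ∀ i ∈ Finset.range m, g (i + 1) = β ^ 2 * f i := by
        intro i _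
        simp [hgdef]
      rw [Finset.sum_congr rfl h1]
      rw [← Finset.mul_sum]
      have h2 : g 0 = 1 / σ0 ^ 2 := by simp [hgdef]
      rw [h2]
      have h3 : ∑ i ∈ Finset.range m, f i ≤ S := by
        rw [hSdef, Finset.sum_range_succ]
        have := hfnn m
        linarith
      have : β ^ 2 * ∑ i ∈ Finset.range m, f i ≤ β ^ 2 * S :=
        mul_le_mul_of_nonneg_left h3 (sq_nonneg _)
      linarith
  -- combine
  have hsplit : S = ∑ k ∈ (Finset.range N).filter (fun k => η k = σ k), f k +
      ∑ k ∈ (Finset.range N).filter (fun k => η k ≠ σ k), f k := by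
    rw [hSdef]
    exact (Finset.sum_filter_add_sum_filter_not _ _ _).symm
  have key : (1 - β ^ 2) * S ≤ 1 / σ0 ^ 2 + T := by nlinarith [hB, hC1, hC2, hC3, hsplit]
  have hS : S ≤ (1 / σ0 ^ 2 + T) / (1 - β ^ 2) := by
    rw [le_div_iff₀ hb2]
    nlinarith
  calc S ≤ (1 / σ0 ^ 2 + T) / (1 - β ^ 2) := hS
    _ = 1 / ((1 - β ^ 2) * σ0 ^ 2) + (1 / (1 - β ^ 2)) * T := by
        field_simp
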